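/- Let G be a finite simple graph with vertex set [n] = {1,...,n}. Then in ℤ[t] one has ∑_{m≥0} isf_m(G) · t^{n−m} = ∏_{k=1}^{n} (t + |E_k(G)|). -/

import Mathlib

open Polynomial Classical

/-- A simple graph on a linearly ordered vertex type is an *increasing forest*
if it is acyclic and, rooting each component at its minimum vertex, labels strictly
increase along every path starting at a root. -/
def IsIncreasingForest {V : Type*} [LinearOrder V] (F : SimpleGraph V) : Prop :=
  F.IsAcyclic ∧ ∀ (r v : V), (∀ w, F.Reachable r w → r ≤ w) →
    ∀ p : F.Walk r v, p.IsPath → p.support.Chain' (· < ·)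

/-- `F` is an increasing spanning forest of `G`: a set of edges of `G` whose
spanning subgraph is an increasing forest. -/
def IsISF {n : ℕ} (G : SimpleGraph (Fin n)) (F : Finset (Sym2 (Fin n))) : Prop :=
  (F : Set (Sym2 (Fin n))) ⊆ G.edgeSet ∧
    IsIncreasingForest (SimpleGraph.fromEdgeSet (F : Set (Sym2 (Fin n))))

/-- The number of increasing spanning forests of `G` with `m` edges. -/
noncomputable def isf {n : ℕ} (G : SimpleGraph (Fin n)) (m : ℕ) : ℕ :=
  ((Finset.univ : Finset (Finset (Sym2 (Fin n)))).filter
    (fun F => IsISF G F ∧ F.card = m)).card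

/-- The set of edges of `G` whose larger endpoint is `k`. -/
noncomputable def Ek {n : ℕ} (G : SimpleGraph (Fin n)) (k : Fin n) : Finset (Sym2 (Fin n)) :=
  Finset.univ.filter (fun e => e ∈ G.edgeSet ∧ ∃ j : Fin n, j < k ∧ e = s(j, k))

namespace ISFAux

open SimpleGraph Finset

variable {n : ℕ}

/-- the larger endpoint of an edge -/
noncomputable def esup (e : Sym2 (Fin n)) : Fin n :=
  Sym2.lift ⟨fun a b => max a b, fun a b => max_comm a b⟩ e

@[simp] lemma esup_mk (a b : Fin n) : esup s(a, b) = max a b := rfl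

lemma mem_Ek_iff {G : SimpleGraph (Fin n)} {k : Fin n} {e : Sym2 (Fin n)} :
    e ∈ Ek G k ↔ e ∈ G.edgeSet ∧ esup e = k := by
  simp only [Ek, Finset.mem_filter, Finset.mem_univ, true_and]
  constructor
  · rintro ⟨he, j, hj, rfl⟩
    exact ⟨he, by simp [max_eq_right hj.le]⟩
  · rintro ⟨he, hsup⟩
    refine ⟨he, ?_⟩
    induction e using Sym2.ind with
    | _ a b =>
      have hab : a ≠ b := by
        intro h
        exact G.not_isDiag_of_mem_edgeSet he (by simp [h])
      rcases le_or_gt a b with hle | hlt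
      · have hb : b = k := by simpa [max_eq_right hle] using hsup
        subst hb
        exact ⟨a, lt_of_le_of_ne hle hab, rfl⟩
      · have ha : a = k := by simpa [max_eq_left hlt.le] using hsup
        subst ha
        exact ⟨b, hlt, Sym2.eq_swap⟩

variable {G : SimpleGraph (Fin n)} {F : Finset (Sym2 (Fin n))}

lemma adj_iff (hsub : (F : Set (Sym2 (Fin n))) ⊆ G.edgeSet) {x y : Fin n} :
    (SimpleGraph.fromEdgeSet (F : Set (Sym2 (Fin n)))).Adj x y ↔ s(x, y) ∈ F := by
  rw [SimpleGraph.fromEdgeSet_adj]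
  constructor
  · rintro ⟨h, _⟩; exact h
  · intro h
    refine ⟨h, fun hxy => ?_⟩
    exact G.not_isDiag_of_mem_edgeSet (hsub (Finset.mem_coe.mpr h)) (by simp [hxy])

lemma down_unique (hinj : Set.InjOn esup (F : Set (Sym2 (Fin n)))) {x y z : Fin n}
    (hx : s(x, z) ∈ F) (hy : s(y, z) ∈ F) (hxz : x < z) (hyz : y < z) : x = y := by
  have h1 : esup s(x, z) = z := by simp [max_eq_right hxz.le]
  have h2 : esup s(y, z) = z := by simp [max_eq_right hyz.le]
  have h := hinj (Finset.mem_coe.mpr hx) (Finset.mem_coe.mpr hy) (h1.trans h2.symm)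
  rw [Sym2.eq_iff] at h
  rcases h with ⟨h, -⟩ | ⟨h, -⟩
  · exact h
  · exact absurd h hxz.ne

lemma aux_chain (hsub : (F : Set (Sym2 (Fin n))) ⊆ G.edgeSet)
    (hinj : Set.InjOn esup (F : Set (Sym2 (Fin n)))) {a v : Fin n}
    (p : (SimpleGraph.fromEdgeSet (F : Set (Sym2 (Fin n)))).Walk a v) (hp : p.IsPath) :
    ∀ a0 : Fin n, a0 < a → s(a0, a) ∈ F → a0 ∉ p.support →
      List.Chain' (· < ·) (a0 :: p.support) := by
  induction p with
  | nil =>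
    intro a0 h _ _
    simpa [List.Chain', List.isChain_pair] using h
  | @cons u c w h q ih =>
    intro a0 ha0 hedge hns
    have hcF : s(u, c) ∈ F := (adj_iff hsub).mp h
    have hcu : u < c := by
      rcases lt_trichotomy u c with h1 | h1 | h1
      · exact h1
      · exact absurd h1 h.ne
      · exfalso
        have : a0 = c := down_unique hinj hedge (Sym2.eq_swap ▸ hcF) ha0 h1
        exact hns (by simp [this, SimpleGraph.Walk.support_cons,
          SimpleGraph.Walk.start_mem_support])
    have hq : q.IsPath := hp.of_cons
    have hu_not : u ∉ q.support := ((SimpleGraph.Walk.cons_isPath_iff h q).mp hp).2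
    have hch := ih hq u hcu hcF hu_not
    simp only [SimpleGraph.Walk.support_cons, List.Chain', List.isChain_cons_cons]
    exact ⟨ha0, hch⟩

lemma no_cycle_at_max (hsub : (F : Set (Sym2 (Fin n))) ⊆ G.edgeSet)
    (hinj : Set.InjOn esup (F : Set (Sym2 (Fin n)))) {u : Fin n}
    (c : (SimpleGraph.fromEdgeSet (F : Set (Sym2 (Fin n)))).Walk u u)
    (hc : c.IsCycle) (hmax : ∀ w ∈ c.support, w ≤ u) : False := by
  cases c with
  | nil => simpa using hc.three_le_length
  | @cons _ b _ h q =>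
    have hb : b < u := by
      refine lt_of_le_of_ne (hmax b ?_) h.ne'
      simp [SimpleGraph.Walk.support_cons, SimpleGraph.Walk.start_mem_support]
    have h3 := hc.three_le_length
    have hqdarts : q.darts ≠ [] := by
      intro hnil
      have h0 : q.length = 0 := by
        simpa using congrArg List.length hnil
      rw [SimpleGraph.Walk.length_cons, h0] at h3
      omega
    set d := q.darts.getLast hqdarts with hd
    have hdsnd : d.snd = u := by rw [hd, SimpleGraph.Walk.getLast_darts_eq_lastDart]; rfl
    have hadj : (SimpleGraph.fromEdgeSet (F : Set (Sym2 (Fin n)))).Adj d.fst d.snd := d.adj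
    have hfmem : d.fst ∈ q.support :=
      q.dart_fst_mem_support_of_mem_darts (List.getLast_mem hqdarts)
    have hfu : d.fst < u := by
      refine lt_of_le_of_ne (hmax d.fst ?_) ?_
      · rw [SimpleGraph.Walk.support_cons]
        exact List.mem_cons_of_mem _ hfmem
      · rw [← hdsnd] at *
        exact hadj.ne
    have hfF : s(d.fst, u) ∈ F := by
      rw [← hdsnd]
      exact (adj_iff hsub).mp hadj
    have hbF : s(b, u) ∈ F := Sym2.eq_swap ▸ (adj_iff hsub).mp h
    have hne : d.fst ≠ b := by
      intro heq
      have hnodup : ((SimpleGraph.Walk.cons h q).edges).Nodup :=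
        hc.isCircuit.isTrail.edges_nodup
      rw [SimpleGraph.Walk.edges_cons, List.nodup_cons] at hnodup
      apply hnodup.1
      have : d.edge ∈ q.edges := List.mem_map_of_mem (List.getLast_mem hqdarts)
      have hde : d.edge = s(u, b) := by
        have hrfl : d.edge = s(d.toProd.1, d.toProd.2) := rfl
        rw [hrfl, heq, hdsnd]
        exact Sym2.eq_swap
      rwa [hde] at this
    exact hne (down_unique hinj hfF hbF hfu hb)

lemma acyclic_of (hsub : (F : Set (Sym2 (Fin n))) ⊆ G.edgeSet)
    (hinj : Set.InjOn esup (F : Set (Sym2 (Fin n)))) :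
    (SimpleGraph.fromEdgeSet (F : Set (Sym2 (Fin n)))).IsAcyclic := by
  intro v c hc
  have hne : c.support.toFinset.Nonempty := ⟨v, by simp⟩
  set u := c.support.toFinset.max' hne with hu_def
  have hu : u ∈ c.support := by
    have := c.support.toFinset.max'_mem hne
    simpa using this
  have hmax : ∀ w ∈ c.support, w ≤ u := fun w hw =>
    Finset.le_max' _ w (by simpa using hw)
  have hmemrot : ∀ w ∈ (c.rotate u hu).support, w ∈ c.support := by
    intro w hw
    rw [SimpleGraph.Walk.support_eq_cons] at hw
    rcases List.mem_cons.mp hw with rfl | hw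
    · exact hu
    · have hperm := c.support_rotate u hu
      exact List.mem_of_mem_tail (hperm.mem_iff.mp hw)
  exact no_cycle_at_max hsub hinj (c.rotate u hu) (hc.rotate hu)
    (fun w hw => hmax w (hmemrot w hw))

lemma increasing_of (hsub : (F : Set (Sym2 (Fin n))) ⊆ G.edgeSet)
    (hinj : Set.InjOn esup (F : Set (Sym2 (Fin n)))) :
    IsIncreasingForest (SimpleGraph.fromEdgeSet (F : Set (Sym2 (Fin n)))) := by
  refine ⟨acyclic_of hsub hinj, ?_⟩
  intro r v hmin p hp
  cases p with
  | nil => simp [List.Chain']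
  | @cons _ b _ h q =>
    have hrb : r < b := lt_of_le_of_ne (hmin b h.reachable) h.ne
    have hrq : r ∉ q.support := ((SimpleGraph.Walk.cons_isPath_iff h q).mp hp).2
    have := aux_chain hsub hinj q hp.of_cons r hrb ((adj_iff hsub).mp h) hrq
    rw [SimpleGraph.Walk.support_cons]
    exact this

lemma rep_of_mem (hsub : (F : Set (Sym2 (Fin n))) ⊆ G.edgeSet) {e : Sym2 (Fin n)}
    (he : e ∈ F) : ∃ a, a < esup e ∧ e = s(a, esup e) := by
  have heG : e ∈ G.edgeSet := hsub (Finset.mem_coe.mpr he)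
  induction e using Sym2.ind with
  | _ x y =>
    have hxy : x ≠ y := by
      intro h
      exact G.not_isDiag_of_mem_edgeSet heG (by simp [h])
    rcases le_or_gt x y with hle | hlt
    · refine ⟨x, ?_, ?_⟩
      · simpa [max_eq_right hle] using lt_of_le_of_ne hle hxy
      · simp [max_eq_right hle]
    · refine ⟨y, ?_, ?_⟩
      · simpa [max_eq_left hlt.le] using hlt
      · rw [esup_mk, max_eq_left hlt.le]
        exact Sym2.eq_swap

lemma chain'_mem_le_getLast : ∀ {l : List (Fin n)}, l.Chain' (· < ·) →
    ∀ {x y : Fin n}, x ∈ l → l.getLast? = some y → x ≤ y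
  | [], _, _, _, hx, _ => absurd hx List.not_mem_nil
  | [a], _, x, y, hx, hy => by
    simp only [List.mem_singleton] at hx
    simp only [List.getLast?_singleton, Option.some.injEq] at hy
    exact hx ▸ hy ▸ le_refl _
  | a :: b :: l, h, x, y, hx, hy => by
    simp only [List.Chain', List.isChain_cons_cons] at h
    have hy' : (b :: l).getLast? = some y := by
      rwa [List.getLast?_cons_cons] at hy
    rcases List.mem_cons.mp hx with rfl | hx
    · exact le_of_lt (lt_of_lt_of_le h.1 (chain'_mem_le_getLast h.2 List.mem_cons_self hy'))
    · exact chain'_mem_le_getLast h.2 hx hy'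

lemma injOn_of_isISF (hisf : IsISF G F) : Set.InjOn esup (F : Set (Sym2 (Fin n))) := by
  obtain ⟨hsub, hacy, hchain⟩ := hisf
  intro e1 he1 e2 he2 hsup
  by_contra hne
  set H := SimpleGraph.fromEdgeSet (F : Set (Sym2 (Fin n))) with hH
  rw [Finset.mem_coe] at he1 he2
  obtain ⟨a, ha, hae⟩ := rep_of_mem hsub he1
  obtain ⟨b, hb, hbe⟩ := rep_of_mem hsub he2
  set v := esup e1 with hv
  rw [← hsup] at hb hbe
  have hab : a ≠ b := by
    intro h
    exact hne (by rw [hae, hbe, h])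
  have haF : s(a, v) ∈ F := hae ▸ he1
  have hbF : s(b, v) ∈ F := hbe ▸ he2
  have hav : H.Adj a v := (adj_iff hsub).mpr haF
  have hbv : H.Adj b v := (adj_iff hsub).mpr hbF
  -- the root of the component of v
  have hRne : (Finset.univ.filter (fun w => H.Reachable v w)).Nonempty :=
    ⟨v, Finset.mem_filter.mpr ⟨Finset.mem_univ _, SimpleGraph.Reachable.refl v⟩⟩
  set r := (Finset.univ.filter (fun w => H.Reachable v w)).min' hRne with hr
  have hrv : H.Reachable v r := by
    have := (Finset.univ.filter (fun w => H.Reachable v w)).min'_mem hRne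
    simpa using this
  have hmin : ∀ w, H.Reachable r w → r ≤ w := by
    intro w hw
    exact Finset.min'_le _ w (by simp [hrv.trans hw])
  have hra : H.Reachable r a := (hrv.symm.trans hav.symm.reachable)
  have hrb : H.Reachable r b := (hrv.symm.trans hbv.symm.reachable)
  obtain ⟨wa⟩ := hra
  obtain ⟨wb⟩ := hrb
  set pa : H.Walk r a := (wa.toPath : H.Walk r a) with hpa
  set pb : H.Walk r b := (wb.toPath : H.Walk r b) with hpb
  have hpaP : pa.IsPath := wa.toPath.2
  have hpbP : pb.IsPath := wb.toPath.2
  have hvna : v ∉ pa.support := by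
    intro hmem
    have hch := hchain r a hmin pa hpaP
    have hlast : pa.support.getLast? = some a := by
      rw [List.getLast?_eq_getLast pa.support_ne_nil]
      exact congrArg some pa.getLast_support
    exact absurd (chain'_mem_le_getLast hch hmem hlast) (not_le.mpr ha)
  have hvnb : v ∉ pb.support := by
    intro hmem
    have hch := hchain r b hmin pb hpbP
    have hlast : pb.support.getLast? = some b := by
      rw [List.getLast?_eq_getLast pb.support_ne_nil]
      exact congrArg some pb.getLast_support
    exact absurd (chain'_mem_le_getLast hch hmem hlast) (not_le.mpr hb)
  have hPa : (pa.concat hav).IsPath := by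
    rw [← SimpleGraph.Walk.isPath_reverse_iff, SimpleGraph.Walk.reverse_concat]
    rw [SimpleGraph.Walk.cons_isPath_iff]
    exact ⟨hpaP.reverse, by
      rw [SimpleGraph.Walk.support_reverse, List.mem_reverse]; exact hvna⟩
  have hPb : (pb.concat hbv).IsPath := by
    rw [← SimpleGraph.Walk.isPath_reverse_iff, SimpleGraph.Walk.reverse_concat]
    rw [SimpleGraph.Walk.cons_isPath_iff]
    exact ⟨hpbP.reverse, by
      rw [SimpleGraph.Walk.support_reverse, List.mem_reverse]; exact hvnb⟩
  have hequ : (⟨pa.concat hav, hPa⟩ : H.Path r v) = ⟨pb.concat hbv, hPb⟩ :=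
    hacy.path_unique _ _
  have heqw : pa.concat hav = pb.concat hbv := congrArg Subtype.val hequ
  have hedge : s(a, v) ∈ (pb.concat hbv).edges := by
    rw [← heqw, SimpleGraph.Walk.edges_concat]
    rw [List.concat_eq_append, List.mem_append]
    exact Or.inr (List.mem_singleton_self _)
  rw [SimpleGraph.Walk.edges_concat, List.concat_eq_append, List.mem_append] at hedge
  rcases hedge with hedge | hedge
  · exact hvnb (pb.snd_mem_support_of_mem_edges hedge)
  · rw [List.mem_singleton, Sym2.eq_iff] at hedge
    rcases hedge with ⟨h1, -⟩ | ⟨h1, -⟩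
    · exact hab h1
    · exact absurd h1 ha.ne

lemma isISF_iff : IsISF G F ↔
    ((F : Set (Sym2 (Fin n))) ⊆ G.edgeSet ∧ Set.InjOn esup (F : Set (Sym2 (Fin n)))) :=
  ⟨fun h => ⟨h.1, injOn_of_isISF h⟩, fun ⟨hsub, hinj⟩ => ⟨hsub, increasing_of hsub hinj⟩⟩

/-- canonical choice of an edge of `F` with larger endpoint `k` -/
noncomputable def pick (F : Finset (Sym2 (Fin n))) (k : Fin n) : Sym2 (Fin n) :=
  if h : ∃ e, e ∈ F ∧ esup e = k then h.choose else s(k, k)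

lemma pick_spec {F : Finset (Sym2 (Fin n))} {k : Fin n} (h : ∃ e, e ∈ F ∧ esup e = k) :
    pick F k ∈ F ∧ esup (pick F k) = k := by
  rw [pick, dif_pos h]
  exact h.choose_spec

lemma fiber_card (G : SimpleGraph (Fin n)) (t : Finset (Fin n)) :
    (((Finset.univ : Finset (Finset (Sym2 (Fin n)))).filter (fun F => IsISF G F)).filter
      (fun F => F.image esup = t)).card = ∏ k ∈ t, (Ek G k).card := by
  classical
  rw [← Finset.card_pi]
  refine Finset.card_bij' (fun F _ => fun k _ => pick F k)
    (fun f _ => t.attach.image (fun k => f k.1 k.2)) ?_ ?_ ?_ ?_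
  · -- pick lands in the pi set
    intro F hF
    rw [Finset.mem_filter] at hF
    obtain ⟨hF1, himg⟩ := hF
    rw [Finset.mem_filter] at hF1
    obtain ⟨-, hISF⟩ := hF1
    obtain ⟨hsub, hinj⟩ := isISF_iff.mp hISF
    rw [Finset.mem_pi]
    intro k hk
    rw [← himg, Finset.mem_image] at hk
    obtain ⟨e, heF, hek⟩ := hk
    have hex : ∃ e, e ∈ F ∧ esup e = k := ⟨e, heF, hek⟩
    obtain ⟨hmem, hsup⟩ := pick_spec hex
    exact mem_Ek_iff.mpr ⟨hsub (Finset.mem_coe.mpr hmem), hsup⟩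
  · -- image lands in the fiber
    intro f hf
    rw [Finset.mem_pi] at hf
    have hEk : ∀ (k : Fin n) (hk : k ∈ t), f k hk ∈ G.edgeSet ∧ esup (f k hk) = k :=
      fun k hk => mem_Ek_iff.mp (hf k hk)
    rw [Finset.mem_filter, Finset.mem_filter]
    refine ⟨⟨Finset.mem_univ _, ?_⟩, ?_⟩
    · rw [isISF_iff]
      constructor
      · intro e he
        rw [Finset.mem_coe, Finset.mem_image] at he
        obtain ⟨⟨k, hk⟩, -, rfl⟩ := he
        exact (hEk k hk).1
      · intro e1 he1 e2 he2 hsup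
        rw [Finset.mem_coe, Finset.mem_image] at he1 he2
        obtain ⟨⟨k1, hk1⟩, -, rfl⟩ := he1
        obtain ⟨⟨k2, hk2⟩, -, rfl⟩ := he2
        rw [(hEk k1 hk1).2, (hEk k2 hk2).2] at hsup
        subst hsup
        rfl
    · ext k
      rw [Finset.mem_image]
      constructor
      · rintro ⟨e, he, rfl⟩
        rw [Finset.mem_image] at he
        obtain ⟨⟨k', hk'⟩, -, rfl⟩ := he
        rw [(hEk k' hk').2]
        exact hk'
      · intro hk
        exact ⟨f k hk, Finset.mem_image_of_mem _ (Finset.mem_attach _ ⟨k, hk⟩), (hEk k hk).2⟩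
  · -- left inverse : image of picks = F
    intro F hF
    rw [Finset.mem_filter] at hF
    obtain ⟨hF1, himg⟩ := hF
    rw [Finset.mem_filter] at hF1
    obtain ⟨-, hISF⟩ := hF1
    obtain ⟨hsub, hinj⟩ := isISF_iff.mp hISF
    ext e
    rw [Finset.mem_image]
    constructor
    · rintro ⟨⟨k, hk⟩, -, rfl⟩
      rw [← himg, Finset.mem_image] at hk
      obtain ⟨e', he', hek⟩ := hk
      exact (pick_spec ⟨e', he', hek⟩).1
    · intro he
      have hk : esup e ∈ t := by
        rw [← himg]
        exact Finset.mem_image_of_mem _ he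
      refine ⟨⟨esup e, hk⟩, Finset.mem_attach _ _, ?_⟩
      have hex : ∃ e', e' ∈ F ∧ esup e' = esup e := ⟨e, he, rfl⟩
      obtain ⟨hmem, hsup⟩ := pick_spec hex
      exact hinj (Finset.mem_coe.mpr hmem) (Finset.mem_coe.mpr he) hsup
  · -- right inverse : picks of image = f
    intro f hf
    rw [Finset.mem_pi] at hf
    have hEk : ∀ (k : Fin n) (hk : k ∈ t), f k hk ∈ G.edgeSet ∧ esup (f k hk) = k :=
      fun k hk => mem_Ek_iff.mp (hf k hk)
    funext k hk
    have hex : ∃ e, e ∈ t.attach.image (fun k' => f k'.1 k'.2) ∧ esup e = k :=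
      ⟨f k hk, Finset.mem_image_of_mem _ (Finset.mem_attach _ ⟨k, hk⟩), (hEk k hk).2⟩
    obtain ⟨hmem, hsup⟩ := pick_spec hex
    rw [Finset.mem_image] at hmem
    obtain ⟨⟨k', hk'⟩, -, heq⟩ := hmem
    have hkk : k' = k := by
      rw [← hsup, ← heq, (hEk k' hk').2]
    subst hkk
    exact heq.symm

end ISFAux

theorem stmt_1 {n : ℕ} (G : SimpleGraph (Fin n)) :
    ∑ m ∈ Finset.range (n + 1), (isf G m : Polynomial ℤ) * X ^ (n - m)
      = ∏ k : Fin n, (X + C ((Ek G k).card : ℤ)) := by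
  classical
  open ISFAux in
  set A := (Finset.univ : Finset (Finset (Sym2 (Fin n)))).filter (fun F => IsISF G F) with hA
  have hcard_le : ∀ F ∈ A, F.card ≤ n := by
    intro F hF
    have hISF := (Finset.mem_filter.mp hF).2
    have hinj := (ISFAux.isISF_iff.mp hISF).2
    calc F.card = (F.image ISFAux.esup).card := (Finset.card_image_of_injOn hinj).symm
      _ ≤ (Finset.univ : Finset (Fin n)).card := Finset.card_le_card (Finset.subset_univ _)
      _ = n := by simp
  -- Left side as a sum over all increasing spanning forests
  have hL : ∑ m ∈ Finset.range (n + 1), (isf G m : Polynomial ℤ) * X ^ (n - m)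
      = ∑ F ∈ A, (X : Polynomial ℤ) ^ (n - F.card) := by
    rw [← Finset.sum_fiberwise_of_maps_to (g := Finset.card)
      (fun F hF => Finset.mem_range.mpr (Nat.lt_succ_of_le (hcard_le F hF)))
      (fun F => (X : Polynomial ℤ) ^ (n - F.card))]
    refine Finset.sum_congr rfl fun m hm => ?_
    rw [Finset.sum_congr rfl (fun F hF => by
        rw [(Finset.mem_filter.mp hF).2] :
        ∀ F ∈ A.filter (fun F => F.card = m),
          (X : Polynomial ℤ) ^ (n - F.card) = X ^ (n - m)),
      Finset.sum_const, nsmul_eq_mul]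
    congr 1
    have : A.filter (fun F => F.card = m)
        = (Finset.univ : Finset (Finset (Sym2 (Fin n)))).filter
            (fun F => IsISF G F ∧ F.card = m) := by
      rw [hA, Finset.filter_filter]
    rw [this, isf]
  -- Middle step : group the forests by their set of larger endpoints
  have hM : ∑ F ∈ A, (X : Polynomial ℤ) ^ (n - F.card)
      = ∑ t ∈ (Finset.univ : Finset (Fin n)).powerset,
          (∏ k ∈ t, C (((Ek G k).card : ℤ))) * X ^ (n - t.card) := by
    rw [← Finset.sum_fiberwise_of_maps_to (g := fun F : Finset (Sym2 (Fin n)) => F.image ISFAux.esup)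
      (fun F _ => Finset.mem_powerset.mpr (Finset.subset_univ _))
      (fun F => (X : Polynomial ℤ) ^ (n - F.card))]
    refine Finset.sum_congr rfl fun t ht => ?_
    have hconst : ∀ F ∈ A.filter (fun F => F.image ISFAux.esup = t),
        (X : Polynomial ℤ) ^ (n - F.card) = X ^ (n - t.card) := by
      intro F hF
      obtain ⟨hFA, himg⟩ := Finset.mem_filter.mp hF
      have hinj := (ISFAux.isISF_iff.mp ((Finset.mem_filter.mp hFA).2)).2
      rw [← himg, Finset.card_image_of_injOn hinj]
    rw [Finset.sum_congr rfl hconst, Finset.sum_const]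
    rw [hA, ISFAux.fiber_card G t, nsmul_eq_mul]
    congr 1
    rw [← map_prod C (fun k => (((Ek G k).card : ℤ))) t]
    rw [← Nat.cast_prod]
    rw [Polynomial.C_eq_natCast]
  -- Right side via the expansion of the product
  have hR : ∏ k : Fin n, ((X : Polynomial ℤ) + C (((Ek G k).card : ℤ)))
      = ∑ t ∈ (Finset.univ : Finset (Fin n)).powerset,
          (∏ k ∈ t, C (((Ek G k).card : ℤ))) * X ^ (n - t.card) := by
    have h := Finset.prod_add (fun k : Fin n => C (((Ek G k).card : ℤ)))
      (fun _ => (X : Polynomial ℤ)) Finset.univ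
    rw [Finset.prod_congr rfl (fun k _ => add_comm (X : Polynomial ℤ) (C (((Ek G k).card : ℤ)))), h]
    refine Finset.sum_congr rfl fun t ht => ?_
    rw [Finset.prod_const, Finset.card_sdiff_of_subset (Finset.mem_powerset.mp ht)]
    simp
  rw [hL, hM, hR]
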